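/- For every integer n ≥ 1, set p = 4n+3, q = 5n+4, r = 20n+11, and f(x,y) = −(q+r)x² + 4qxy − 4(q−p)y² − 4y. Then the maximum of f(a,m) over all integer pairs (a,m) with −p ≤ a ≤ p, a odd, and 0 ≤ m ≤ 2n+1 equals −n−7, attained at (a,m) = (1,2). Equivalently, (max f + q + r)/4 = 6n+2. -/
import Mathlib

/-- The integer-valued quadratic `f(x,y) = −(q+r)x² + 4qxy − 4(q−p)y² − 4y`. -/
def fZ (p q r a m : ℤ) : ℤ :=
  -(q + r) * a ^ 2 + 4 * q * a * m - 4 * (q - p) * m ^ 2 - 4 * m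

/-- For every integer `n ≥ 1`, with `(p,q,r) = (4 * n + 3, 5 * n + 4, 20 * n + 11)`, the maximum
of `f(a,m)` over integer pairs `(a,m)` with `−p ≤ a ≤ p`, `a` odd, `0 ≤ m ≤ 2 * n + 1` equals
`-n - 7`, attained as indicated; equivalently `(max f + q + r)/4 = 6 * n + 2`. -/
theorem stmt_18 (n : ℤ) (hn : 1 ≤ n) :
    IsGreatest
      {x : ℤ | ∃ a m : ℤ, -(4 * n + 3) ≤ a ∧ a ≤ 4 * n + 3 ∧ Odd a ∧ 0 ≤ m ∧ m ≤ 2 * n + 1 ∧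
        x = fZ (4 * n + 3) (5 * n + 4) (20 * n + 11) a m}
      (-n - 7) ∧
    fZ (4 * n + 3) (5 * n + 4) (20 * n + 11) 1 2 = -n - 7 ∧
    ((-n - 7) + ((5 * n + 4) + (20 * n + 11))) / 4 = 6 * n + 2 := by
  have hval : fZ (4 * n + 3) (5 * n + 4) (20 * n + 11) 1 2 = -n - 7 := by
    unfold fZ; ring
  refine ⟨⟨⟨1, 2, by linarith, by linarith, ⟨0, by ring⟩, by norm_num, by linarith,
      hval.symm⟩, ?_⟩, hval, by omega⟩
  rintro x ⟨a, m, ha1, ha2, ⟨k, hk⟩, hm0, hm1, rfl⟩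
  subst hk
  set t : ℤ := m - 2 - 5 * k with ht
  have key : fZ (4 * n + 3) (5 * n + 4) (20 * n + 11) (2 * k + 1) m =
      -n - 7 - ((4*n+4)*t^2 + (8*k-4*n+4)*t + 16*k) := by
    unfold fZ; rw [ht]; ring
  rw [key]
  have hH : 0 ≤ (4*n+4)*t^2 + (8*k-4*n+4)*t + 16*k := by
    have hk1 : -(2*n+2) ≤ k := by linarith
    have hk2 : k ≤ 2*n+1 := by linarith
    have htl : -2 - 5*k ≤ t := by omega
    have htu : t ≤ 2*n - 1 - 5*k := by omega
    rcases le_or_gt k (-1) with hneg | hpos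
    · -- k ≤ -1, then t ≥ -2 - 5k ≥ 3
      have h3 : 3 ≤ t := by omega
      nlinarith [mul_nonneg (by omega : (0:ℤ) ≤ t + 2) (by omega : (0:ℤ) ≤ 5*k + t + 2),
        mul_nonneg (by omega : (0:ℤ) ≤ t - 3) (by omega : (0:ℤ) ≤ t),
        mul_nonneg (by linarith : (0:ℤ) ≤ n - 1) (mul_self_nonneg t)]
    · have hk0 : 0 ≤ k := by omega
      rcases le_or_gt 1 t with h1 | h1
      · nlinarith [mul_nonneg (by omega : (0:ℤ) ≤ t - 1) (by omega : (0:ℤ) ≤ t),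
          mul_nonneg hk0 (by omega : (0:ℤ) ≤ t)]
      rcases le_or_gt t (-2) with h2 | h2
      · -- t ≤ -2, k ≤ 2n+1
        nlinarith [mul_nonneg (by omega : (0:ℤ) ≤ -(t+2)) (by omega : (0:ℤ) ≤ 2*n+1-k),
          mul_nonneg (by omega : (0:ℤ) ≤ -(t+2)) (by omega : (0:ℤ) ≤ -t),
          mul_nonneg (by linarith : (0:ℤ) ≤ n - 1) (mul_self_nonneg (t+2))]
      · interval_cases t <;> nlinarith
  linarith
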